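/- Let F be the cofinite × cofinite filter on ω × ω: for A ⊆ ω × ω, A ∈ F iff for all but finitely many n, for all but finitely many m, (n,m) ∈ A. Let F* = {(ω×ω) \ A : A ∈ F} be its dual ideal. Identifying subsets of ω × ω with points of the Cantor space 2^{ω×ω} (product topology), there is no set C in Δ⁰₃(2^{ω×ω}) with F ⊆ C and C ∩ F* = ∅. -/
import Mathlib


/-- The Borel hierarchy: `SigmaZero α A` means `A` is in the Borel class Σ⁰_α.
Σ⁰₁ is the collection of open sets; for α > 1, Σ⁰_α consists of countable unions
⋃ k, A k where each A k is the complement of a Σ⁰_{β k} set for some 1 ≤ β k < α. -/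
inductive SigmaZero {X : Type*} [TopologicalSpace X] : Ordinal.{0} → Set X → Prop
  | isOpen {A : Set X} (h : IsOpen A) : SigmaZero 1 A
  | iUnion {α : Ordinal.{0}} (hα : 1 < α) (A : ℕ → Set X) (β : ℕ → Ordinal.{0})
      (hβ1 : ∀ k, 1 ≤ β k) (hβ : ∀ k, β k < α)
      (h : ∀ k, SigmaZero (β k) (A k)ᶜ) : SigmaZero α (⋃ k, A k)

/-- `A` is Π⁰_α iff its complement is Σ⁰_α. -/
def PiZero {X : Type*} [TopologicalSpace X] (α : Ordinal.{0}) (A : Set X) : Prop :=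
  SigmaZero α Aᶜ

/-- `A` is Δ⁰_α iff it is both Σ⁰_α and Π⁰_α. -/
def DeltaZero {X : Type*} [TopologicalSpace X] (α : Ordinal.{0}) (A : Set X) : Prop :=
  SigmaZero α A ∧ PiZero α A

/-- The cofinite × cofinite filter on ω × ω, as a set of characteristic functions in the
Cantor space `ℕ × ℕ → Bool`: `A ∈ cofXcof` iff for all but finitely many `n`,
for all but finitely many `m`, `(n, m) ∈ A`. -/
def cofXcof : Set (ℕ × ℕ → Bool) :=
  {A | ∀ᶠ n in Filter.cofinite, ∀ᶠ m in Filter.cofinite, A (n, m) = true}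

/-- The dual ideal of the cofinite × cofinite filter: complements of its members. -/
def cofXcofStar : Set (ℕ × ℕ → Bool) :=
  {A | (fun p => ! A p) ∈ cofXcof}

namespace Stmt9Proof

abbrev Pt : Type := ℕ × ℕ → Bool

/-- The set of points eventually (row-wise and column-wise) equal to `b`. -/
def Tgt (b : Bool) : Set Pt :=
  {x | ∀ᶠ n in Filter.cofinite, ∀ᶠ m in Filter.cofinite, x (n, m) = b}

lemma mem_cofXcof_iff {x : Pt} : x ∈ cofXcof ↔ x ∈ Tgt true := Iff.rfl

lemma mem_star_iff {x : Pt} : x ∈ cofXcofStar ↔ x ∈ Tgt false := by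
  unfold cofXcofStar cofXcof Tgt
  simp only [Set.mem_setOf_eq, Bool.not_eq_true']

/-- Finite cylinder around `v` with support `D`. -/
def Cyl (D : Finset (ℕ × ℕ)) (v : Pt) : Set Pt := {x | ∀ p ∈ D, x p = v p}

lemma isClosed_eval (p : ℕ × ℕ) (b : Bool) : IsClosed {x : Pt | x p = b} := by
  have h : {x : Pt | x p = b} = (fun x : Pt => x p) ⁻¹' {b} := rfl
  rw [h]
  exact isClosed_singleton.preimage (continuous_apply p)

lemma isClosed_cyl (D : Finset (ℕ × ℕ)) (v : Pt) : IsClosed (Cyl D v) := by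
  have h : Cyl D v = ⋂ p ∈ D, {x : Pt | x p = v p} := by
    ext x; simp [Cyl]
  rw [h]
  exact isClosed_biInter fun p _ => isClosed_eval p (v p)

lemma exists_cyl_subset {U : Set Pt} (hU : IsOpen U) {z : Pt} (hz : z ∈ U) :
    ∃ D : Finset (ℕ × ℕ), Cyl D z ⊆ U := by
  obtain ⟨I, u, hu, hsub⟩ := (isOpen_pi_iff.mp hU) z hz
  refine ⟨I, fun y hy => hsub ?_⟩
  rw [Set.mem_pi]
  intro p hp
  rw [hy p hp]
  exact (hu p hp).2

lemma open_eq_iUnion_closed {U : Set Pt} (hU : IsOpen U) :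
    ∃ E : ℕ → Set Pt, (∀ j, IsClosed (E j)) ∧ U = ⋃ j, E j := by
  classical
  rcases Set.eq_empty_or_nonempty U with h | ⟨z0, hz0⟩
  · exact ⟨fun _ => ∅, fun _ => isClosed_empty, by simp [h]⟩
  have hne : Nonempty {c : Finset ((ℕ × ℕ) × Bool) // {x : Pt | ∀ q ∈ c, x q.1 = q.2} ⊆ U} := by
    obtain ⟨D, hD⟩ := exists_cyl_subset hU hz0
    refine ⟨⟨D.image (fun p => (p, z0 p)), ?_⟩⟩
    intro x hx
    apply hD
    intro p hp
    exact hx (p, z0 p) (Finset.mem_image_of_mem _ hp)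
  obtain ⟨f, hf⟩ := exists_surjective_nat
    {c : Finset ((ℕ × ℕ) × Bool) // {x : Pt | ∀ q ∈ c, x q.1 = q.2} ⊆ U}
  refine ⟨fun j => {x : Pt | ∀ q ∈ (f j).1, x q.1 = q.2}, ?_, ?_⟩
  · intro j
    show IsClosed {x : Pt | ∀ q ∈ (f j).1, x q.1 = q.2}
    have h : {x : Pt | ∀ q ∈ (f j).1, x q.1 = q.2}
        = ⋂ q ∈ (f j).1, {x : Pt | x q.1 = q.2} := by
      ext x; simp
    rw [h]
    exact isClosed_biInter fun q _ => isClosed_eval q.1 q.2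
  · apply Set.Subset.antisymm
    · intro x hx
      obtain ⟨D, hD⟩ := exists_cyl_subset hU hx
      obtain ⟨j, hj⟩ := hf ⟨D.image (fun p => (p, x p)), by
        intro y hy
        apply hD
        intro p hp
        exact hy (p, x p) (Finset.mem_image_of_mem _ hp)⟩
      refine Set.mem_iUnion.mpr ⟨j, ?_⟩
      show x ∈ {x : Pt | ∀ q ∈ (f j).1, x q.1 = q.2}
      rw [hj]
      intro q hq
      obtain ⟨p, hp, rfl⟩ := Finset.mem_image.mp hq
      rfl
    · intro x hx
      obtain ⟨j, hj⟩ := Set.mem_iUnion.mp hx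
      exact (f j).2 hj

section Inversion

variable {Y : Type*} [TopologicalSpace Y]

lemma sigmaZero_cases {α : Ordinal} {S : Set Y} (h : SigmaZero α S) :
    (α = 1 ∧ IsOpen S) ∨
      (1 < α ∧ ∃ (A : ℕ → Set Y) (β : ℕ → Ordinal), (∀ k, 1 ≤ β k) ∧ (∀ k, β k < α) ∧
        (∀ k, SigmaZero (β k) (A k)ᶜ) ∧ S = ⋃ k, A k) := by
  cases h with
  | isOpen h => exact Or.inl ⟨rfl, h⟩
  | iUnion hα A β hβ1 hβ h => exact Or.inr ⟨hα, A, β, hβ1, hβ, h, rfl⟩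

lemma sigmaZero_one_isOpen {S : Set Y} (h : SigmaZero 1 S) : IsOpen S := by
  rcases sigmaZero_cases h with ⟨_, h⟩ | ⟨h1, _⟩
  · exact h
  · exact absurd h1 (lt_irrefl _)

lemma ord_eq_one_or_two {β : Ordinal} (h1 : 1 ≤ β) (h : β < 3) : β = 1 ∨ β = 2 := by
  rw [show (3 : Ordinal) = 2 + 1 by norm_num, Ordinal.add_one_eq_succ, Order.lt_succ_iff] at h
  rcases lt_or_eq_of_le h with h2 | h2
  · left
    rw [show (2 : Ordinal) = 1 + 1 by norm_num, Ordinal.add_one_eq_succ, Order.lt_succ_iff] at h2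
    exact le_antisymm h2 h1
  · right; exact h2

lemma sigmaZero_two_structure {S : Set Y} (h : SigmaZero 2 S) :
    ∃ E : ℕ → Set Y, (∀ j, IsClosed (E j)) ∧ S = ⋃ j, E j := by
  rcases sigmaZero_cases h with ⟨h1, _⟩ | ⟨_, A, β, hβ1, hβ, hc, rfl⟩
  · exact absurd h1 (ne_of_gt one_lt_two)
  · refine ⟨A, fun j => ?_, rfl⟩
    have hb : β j = 1 := by
      have h2 := hβ j
      rw [show (2 : Ordinal) = 1 + 1 by norm_num, Ordinal.add_one_eq_succ,
        Order.lt_succ_iff] at h2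
      exact le_antisymm h2 (hβ1 j)
    have hopen := sigmaZero_one_isOpen (hb ▸ hc j)
    exact isOpen_compl_iff.mp hopen

end Inversion

lemma sigmaZero_three_structure {C : Set Pt} (h : SigmaZero 3 C) :
    ∃ E : ℕ → ℕ → Set Pt, (∀ k j, IsClosed (E k j)) ∧ C = ⋃ k, (⋃ j, E k j)ᶜ := by
  rcases sigmaZero_cases h with ⟨h1, _⟩ | ⟨_, A, β, hβ1, hβ, hc, rfl⟩
  · exact absurd h1 (ne_of_gt (by norm_num : (1 : Ordinal) < 3))
  · have hk : ∀ k, ∃ E : ℕ → Set Pt, (∀ j, IsClosed (E j)) ∧ (A k)ᶜ = ⋃ j, E j := by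
      intro k
      rcases ord_eq_one_or_two (hβ1 k) (hβ k) with hb | hb
      · exact open_eq_iUnion_closed (sigmaZero_one_isOpen (hb ▸ hc k))
      · exact sigmaZero_two_structure (hb ▸ hc k)
    choose E hEc hEq using hk
    refine ⟨E, hEc, Set.iUnion_congr fun k => ?_⟩
    rw [← hEq k, compl_compl]

/-- A "cube": all points extending the finite condition `(D, v)` whose value at any
undecided coordinate in a row `< ρ` equals the row-default `d`. -/
def Cube (D : Finset (ℕ × ℕ)) (v : Pt) (d : ℕ → Bool) (ρ : ℕ) : Set Pt :=
  {x | (∀ p ∈ D, x p = v p) ∧ ∀ p : ℕ × ℕ, p ∉ D → p.1 < ρ → x p = d p.1}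

structure FusState (D₀ : Finset (ℕ × ℕ)) (v₀ : Pt) (d : ℕ → Bool) (ρ : ℕ) : Type where
  D : Finset (ℕ × ℕ)
  v : Pt
  hD : D₀ ⊆ D
  hagree : ∀ p ∈ D₀, v p = v₀ p
  hlow : ∀ p ∈ D, p ∉ D₀ → p.1 < ρ → v p = d p.1

/-- Key fusion step: if every point that is eventually-`b` lies in some `E j`, then from any
position `(D₀, v₀, d, ρ)` some cube (with defaults `d` below `ρ` and `b` from `ρ` to `ρ'`)
is entirely contained in some `E j`. -/
lemma keyStep (b : Bool) (E : ℕ → Set Pt) (hEc : ∀ j, IsClosed (E j))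
    (hyp : ∀ x ∈ Tgt b, ∃ j, x ∈ E j)
    (D₀ : Finset (ℕ × ℕ)) (v₀ : Pt) (d : ℕ → Bool) (ρ : ℕ) :
    ∃ (D : Finset (ℕ × ℕ)) (v : Pt) (j ρ' : ℕ),
      D₀ ⊆ D ∧ ρ ≤ ρ' ∧ (∀ p ∈ D₀, v p = v₀ p) ∧
      (∀ p ∈ D, p ∉ D₀ → p.1 < ρ → v p = d p.1) ∧
      Cube D v (fun n => if n < ρ then d n else b) ρ' ⊆ E j := by
  classical
  set d0 : ℕ → Bool := fun n => if n < ρ then d n else b with hd0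
  by_contra hcon
  push_neg at hcon
  have hstep : ∀ (j : ℕ) (s : FusState D₀ v₀ d ρ), ∃ s' : FusState D₀ v₀ d ρ,
      s.D ⊆ s'.D ∧ (∀ p ∈ s.D, s'.v p = s.v p) ∧
      (∀ p ∈ s'.D, p ∉ s.D → p.1 < ρ + j → s'.v p = d0 p.1) ∧
      Cyl s'.D s'.v ⊆ (E j)ᶜ := by
    intro j s
    have h1 := hcon s.D s.v j (ρ + j) s.hD (Nat.le_add_right _ _) s.hagree s.hlow
    obtain ⟨z, hz1, hz2⟩ := Set.not_subset.mp h1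
    obtain ⟨hza, hzb⟩ := hz1
    obtain ⟨D', hD'⟩ := exists_cyl_subset (hEc j).isOpen_compl (hz2 : z ∈ (E j)ᶜ)
    refine ⟨⟨s.D ∪ D', z, s.hD.trans Finset.subset_union_left, ?_, ?_⟩,
      Finset.subset_union_left, ?_, ?_, ?_⟩
    · intro p hp
      rw [hza p (s.hD hp)]
      exact s.hagree p hp
    · intro p hp hp0 hplt
      by_cases hmem : p ∈ s.D
      · rw [hza p hmem]
        exact s.hlow p hmem hp0 hplt
      · rw [hzb p hmem (lt_of_lt_of_le hplt (Nat.le_add_right _ _))]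
        simp [hd0, hplt]
    · intro p hp
      exact hza p hp
    · intro p _ hnp hplt
      exact hzb p hnp hplt
    · intro x hx
      apply hD'
      intro p hp
      exact hx p (Finset.mem_union_right _ hp)
  choose stepf hstep1 hstep2 hstep3 hstep4 using hstep
  let seq : ℕ → FusState D₀ v₀ d ρ := fun j =>
    Nat.rec ⟨D₀, v₀, Finset.Subset.refl _, fun _ _ => rfl, fun p hp hnp _ => absurd hp hnp⟩
      (fun j s => stepf j s) j
  have hseqsucc : ∀ j, seq (j + 1) = stepf j (seq j) := fun _ => rfl
  have hmono : ∀ j j', j ≤ j' → (seq j).D ⊆ (seq j').D := by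
    intro j j' h
    induction j', h using Nat.le_induction with
    | base => exact Finset.Subset.refl _
    | succ n hmn ih =>
      rw [hseqsucc n]
      exact ih.trans (hstep1 n (seq n))
  have hvstab : ∀ j j', j ≤ j' → ∀ p ∈ (seq j).D, (seq j').v p = (seq j).v p := by
    intro j j' h
    induction j', h using Nat.le_induction with
    | base => intro p _; rfl
    | succ n hmn ih =>
      intro p hp
      rw [hseqsucc n, hstep2 n (seq n) p (hmono j n hmn hp)]
      exact ih p hp
  have hcyl : ∀ j, Cyl (seq (j + 1)).D (seq (j + 1)).v ⊆ (E j)ᶜ := by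
    intro j
    rw [hseqsucc j]
    exact hstep4 j (seq j)
  let x : Pt := fun p => if h : ∃ j, p ∈ (seq j).D then (seq h.choose).v p else d0 p.1
  have hx1 : ∀ j, ∀ p ∈ (seq j).D, x p = (seq j).v p := by
    intro j p hp
    have hex : ∃ j, p ∈ (seq j).D := ⟨j, hp⟩
    show (if h : ∃ j, p ∈ (seq j).D then (seq h.choose).v p else d0 p.1) = _
    rw [dif_pos hex]
    rcases le_total hex.choose j with h | h
    · exact (hvstab _ _ h p hex.choose_spec).symm
    · exact hvstab j _ h p hp
  have hxE : ∀ j, x ∈ (E j)ᶜ := by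
    intro j
    apply hcyl j
    intro p hp
    exact hx1 (j + 1) p hp
  have hxT : x ∈ Tgt b := by
    apply Filter.eventually_cofinite.mpr
    refine Set.Finite.subset (Set.finite_Iio ρ) ?_
    intro n hn
    simp only [Set.mem_Iio]
    by_contra hge
    apply hn
    apply Filter.eventually_cofinite.mpr
    have hinj : Function.Injective (fun m : ℕ => (n, m)) := by
      intro a b h
      exact (Prod.ext_iff.mp h).2
    refine Set.Finite.subset
      (Set.Finite.preimage (hinj.injOn) (seq (n + 1)).D.finite_toSet) ?_
    intro m hm
    simp only [Set.mem_preimage, Finset.coe_mem, Finset.mem_coe]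
    by_contra hnot
    apply hm
    show x (n, m) = b
    have hb0 : d0 n = b := by simp [hd0, hge]
    by_cases hex : ∃ j, (n, m) ∈ (seq j).D
    · have hj0 : (n, m) ∈ (seq (Nat.find hex)).D := Nat.find_spec hex
      have hgt : n + 1 < Nat.find hex := by
        by_contra hle
        push_neg at hle
        exact hnot (hmono _ _ hle hj0)
      obtain ⟨s, hs⟩ : ∃ s, Nat.find hex = s + 1 := ⟨Nat.find hex - 1, by omega⟩
      have hjm : (n, m) ∈ (seq (s + 1)).D := hs ▸ hj0
      have hns : (n, m) ∉ (seq s).D := Nat.find_min hex (by omega)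
      have hval : (seq (s + 1)).v (n, m) = d0 n := by
        rw [hseqsucc s]
        exact hstep3 s (seq s) (n, m) (hseqsucc s ▸ hjm) hns (by simp; omega)
      rw [hx1 (s + 1) _ hjm, hval, hb0]
    · show (if h : ∃ j, (n, m) ∈ (seq j).D then (seq h.choose).v (n, m) else d0 (n, m).1) = b
      rw [dif_neg hex]
      exact hb0
  obtain ⟨j, hj⟩ := hyp x hxT
  exact hxE j hj

structure MState : Type where
  Dm : Finset (ℕ × ℕ)
  vm : Pt
  rm : ℕ
  dm : ℕ → Bool

lemma master (G H : ℕ → ℕ → Set Pt) (hGc : ∀ k j, IsClosed (G k j))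
    (hHc : ∀ k j, IsClosed (H k j))
    (hypG : ∀ k, ∀ x ∈ Tgt false, ∃ j, x ∈ G k j)
    (hypH : ∀ k, ∀ x ∈ Tgt true, ∃ j, x ∈ H k j) :
    ∃ x : Pt, (∀ k, ∃ j, x ∈ G k j) ∧ (∀ k, ∃ j, x ∈ H k j) := by
  classical
  set fam : ℕ → ℕ → Set Pt := fun t => if t % 2 = 0 then G (t / 2) else H (t / 2) with hfam
  set bitt : ℕ → Bool := fun t => if t % 2 = 0 then false else true with hbitt
  have hfamc : ∀ t j, IsClosed (fam t j) := by
    intro t j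
    by_cases h : t % 2 = 0
    · simp only [hfam, if_pos h]; exact hGc _ _
    · simp only [hfam, if_neg h]; exact hHc _ _
  have hfhyp : ∀ t, ∀ x ∈ Tgt (bitt t), ∃ j, x ∈ fam t j := by
    intro t x hx
    by_cases h : t % 2 = 0
    · simp only [hbitt, if_pos h] at hx
      simp only [hfam, if_pos h]
      exact hypG _ x hx
    · simp only [hbitt, if_neg h] at hx
      simp only [hfam, if_neg h]
      exact hypH _ x hx
  have hstep : ∀ (t : ℕ) (s : MState), ∃ s' : MState,
      s.Dm ⊆ s'.Dm ∧ s.rm ≤ s'.rm ∧ (∀ p ∈ s.Dm, s'.vm p = s.vm p) ∧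
      (∀ p ∈ s'.Dm, p ∉ s.Dm → p.1 < s.rm → s'.vm p = s.dm p.1) ∧
      (s'.dm = fun n => if n < s.rm then s.dm n else bitt t) ∧
      (∃ j, Cube s'.Dm s'.vm s'.dm s'.rm ⊆ fam t j) := by
    intro t s
    obtain ⟨D, v, j, ρ', h1, h2, h3, h4, h5⟩ :=
      keyStep (bitt t) (fam t) (hfamc t) (hfhyp t) s.Dm s.vm s.dm s.rm
    exact ⟨⟨D, v, ρ', fun n => if n < s.rm then s.dm n else bitt t⟩,
      h1, h2, h3, h4, rfl, ⟨j, h5⟩⟩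
  choose stepf hs1 hs2 hs3 hs4 hs5 hs6 using hstep
  let ms : ℕ → MState := fun t =>
    Nat.rec ⟨∅, fun _ => false, 0, fun _ => false⟩ (fun t s => stepf t s) t
  have hmsucc : ∀ t, ms (t + 1) = stepf t (ms t) := fun _ => rfl
  have hDmono : ∀ t t', t ≤ t' → (ms t).Dm ⊆ (ms t').Dm := by
    intro t t' h
    induction t', h using Nat.le_induction with
    | base => exact Finset.Subset.refl _
    | succ u hu ih =>
      rw [hmsucc u]
      exact ih.trans (hs1 u (ms u))
  have hrmono : ∀ t t', t ≤ t' → (ms t).rm ≤ (ms t').rm := by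
    intro t t' h
    induction t', h using Nat.le_induction with
    | base => exact le_refl _
    | succ u hu ih =>
      rw [hmsucc u]
      exact ih.trans (hs2 u (ms u))
  have hvstab : ∀ t t', t ≤ t' → ∀ p ∈ (ms t).Dm, (ms t').vm p = (ms t).vm p := by
    intro t t' h
    induction t', h using Nat.le_induction with
    | base => intro p _; rfl
    | succ u hu ih =>
      intro p hp
      rw [hmsucc u, hs3 u (ms u) p (hDmono t u hu hp)]
      exact ih p hp
  have hdstab : ∀ t t', t ≤ t' → ∀ n, n < (ms t).rm → (ms t').dm n = (ms t).dm n := by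
    intro t t' h
    induction t', h using Nat.le_induction with
    | base => intro n _; rfl
    | succ u hu ih =>
      intro n hn
      have h1 : n < (ms u).rm := lt_of_lt_of_le hn (hrmono t u hu)
      rw [hmsucc u, hs5 u (ms u)]
      simp only [if_pos h1]
      exact ih n hn
  let x : Pt := fun p =>
    if h : ∃ t, p ∈ (ms t).Dm then (ms h.choose).vm p
    else if h2 : ∃ t, p.1 < (ms t).rm then (ms h2.choose).dm p.1 else false
  have hx1 : ∀ t, ∀ p ∈ (ms t).Dm, x p = (ms t).vm p := by
    intro t p hp
    have hex : ∃ t, p ∈ (ms t).Dm := ⟨t, hp⟩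
    show (if h : ∃ t, p ∈ (ms t).Dm then (ms h.choose).vm p else _) = _
    rw [dif_pos hex]
    rcases le_total hex.choose t with h | h
    · exact (hvstab _ _ h p hex.choose_spec).symm
    · exact hvstab t _ h p hp
  have hxcube : ∀ t, x ∈ Cube (ms (t + 1)).Dm (ms (t + 1)).vm (ms (t + 1)).dm (ms (t + 1)).rm := by
    intro t
    refine ⟨fun p hp => hx1 (t + 1) p hp, ?_⟩
    intro p hp hplt
    by_cases hex : ∃ u, p ∈ (ms u).Dm
    · have hj0 : p ∈ (ms (Nat.find hex)).Dm := Nat.find_spec hex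
      have hgt : t + 1 < Nat.find hex := by
        by_contra hle
        push_neg at hle
        exact hp (hDmono _ _ hle hj0)
      obtain ⟨s, hs⟩ : ∃ s, Nat.find hex = s + 1 := ⟨Nat.find hex - 1, by omega⟩
      have hjm : p ∈ (ms (s + 1)).Dm := hs ▸ hj0
      have hns : p ∉ (ms s).Dm := Nat.find_min hex (by omega)
      have hlt2 : p.1 < (ms s).rm := lt_of_lt_of_le hplt (hrmono (t + 1) s (by omega))
      have hval : (ms (s + 1)).vm p = (ms s).dm p.1 := by
        rw [hmsucc s]
        exact hs4 s (ms s) p (hmsucc s ▸ hjm) hns hlt2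
      have hd : (ms s).dm p.1 = (ms (t + 1)).dm p.1 := hdstab (t + 1) s (by omega) p.1 hplt
      rw [hx1 (s + 1) p hjm, hval, hd]
    · have hxv : x p = (if h2 : ∃ u, p.1 < (ms u).rm then (ms h2.choose).dm p.1 else false) :=
        dif_neg hex
      rw [hxv]
      have hex2 : ∃ u, p.1 < (ms u).rm := ⟨t + 1, hplt⟩
      rw [dif_pos hex2]
      rcases le_total hex2.choose (t + 1) with h | h
      · exact (hdstab _ _ h p.1 hex2.choose_spec).symm
      · exact hdstab (t + 1) _ h p.1 hplt
  have hfam' : ∀ t, ∃ j, x ∈ fam t j := by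
    intro t
    obtain ⟨j, hj⟩ := hs6 t (ms t)
    refine ⟨j, hj ?_⟩
    have h := hxcube t
    rw [hmsucc t] at h
    exact h
  refine ⟨x, fun k => ?_, fun k => ?_⟩
  · have h := hfam' (2 * k)
    have h1 : (2 * k) % 2 = 0 := by omega
    have h2 : (2 * k) / 2 = k := by omega
    simpa only [hfam, if_pos h1, h2] using h
  · have h := hfam' (2 * k + 1)
    have h1 : ¬((2 * k + 1) % 2 = 0) := by omega
    have h2 : (2 * k + 1) / 2 = k := by omega
    simpa only [hfam, if_neg h1, h2] using h

end Stmt9Proof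

/-- The cofinite × cofinite filter cannot be separated from its dual ideal by a Δ⁰₃ set. -/
theorem stmt9 :
    ¬ ∃ C : Set (ℕ × ℕ → Bool), DeltaZero 3 C ∧ cofXcof ⊆ C ∧ C ∩ cofXcofStar = ∅ := by
  rintro ⟨C, ⟨hS, hP⟩, hF, hdisj⟩
  obtain ⟨G, hGc, hCeq⟩ := Stmt9Proof.sigmaZero_three_structure hS
  obtain ⟨H, hHc, hCceq⟩ := Stmt9Proof.sigmaZero_three_structure hP
  have hypG : ∀ k, ∀ x ∈ Stmt9Proof.Tgt false, ∃ j, x ∈ G k j := by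
    intro k x hx
    have hxstar : x ∈ cofXcofStar := Stmt9Proof.mem_star_iff.mpr hx
    have hxnC : x ∉ C := by
      intro hxC
      have hmem : x ∈ C ∩ cofXcofStar := ⟨hxC, hxstar⟩
      rw [hdisj] at hmem
      exact hmem
    rw [hCeq] at hxnC
    have h1 : x ∉ (⋃ j, G k j)ᶜ := fun hk => hxnC (Set.mem_iUnion.mpr ⟨k, hk⟩)
    rw [Set.notMem_compl_iff] at h1
    exact Set.mem_iUnion.mp h1
  have hypH : ∀ k, ∀ x ∈ Stmt9Proof.Tgt true, ∃ j, x ∈ H k j := by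
    intro k x hx
    have hxC : x ∈ C := hF hx
    have hxn : x ∉ Cᶜ := fun h => h hxC
    rw [hCceq] at hxn
    have h1 : x ∉ (⋃ j, H k j)ᶜ := fun hk => hxn (Set.mem_iUnion.mpr ⟨k, hk⟩)
    rw [Set.notMem_compl_iff] at h1
    exact Set.mem_iUnion.mp h1
  obtain ⟨x, hxG, hxH⟩ := Stmt9Proof.master G H hGc hHc hypG hypH
  have hx1 : x ∉ C := by
    rw [hCeq]
    intro hx
    obtain ⟨k, hk⟩ := Set.mem_iUnion.mp hx
    obtain ⟨j, hj⟩ := hxG k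
    exact hk (Set.mem_iUnion.mpr ⟨j, hj⟩)
  have hx2 : x ∉ Cᶜ := by
    rw [hCceq]
    intro hx
    obtain ⟨k, hk⟩ := Set.mem_iUnion.mp hx
    obtain ⟨j, hj⟩ := hxH k
    exact hk (Set.mem_iUnion.mpr ⟨j, hj⟩)
  exact hx2 hx1
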